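/- Let A(t) act on the charge-zero bosonic ghost Fock space F^{−1}_{(0)} with basis indexed by pairs of partitions (λ, μ) of equal length l, where the basis vector v_{λ,μ} is an eigenvector of q^{L_0}A(t) with eigenvalue q^{|λ|+|μ|−l} (Σ_{i=1}^l (t^{λ_i−1/2} − t^{−μ_i+1/2}) + 1/(t^{−1/2}−t^{1/2})). Then the 1-point function A^{(0)}_{−1}(q;t) = Σ_{(λ,μ)} eigenvalue equals ₂Φ₁(0,0;q;q)/(t^{−1/2}−t^{1/2}) + t^{1/2} Σ_{i≥1} (q^{i−1}/((q;q)_{i−1}²)) (₃Φ₂(0,0,q; tq^i, q^i; q) − 1) − t^{−1/2} Σ_{i≥1} (q^{i−1}/((q;q)_{i−1}²)) (₃Φ₂(0,0,q; t^{−1}q^i, q^i; q) − 1). -/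

import Mathlib

open scoped BigOperators

/-- The finite q-Pochhammer symbol `(a;q)_n`. -/
noncomputable def qPoch (a q : ℂ) : ℕ → ℂ
  | 0 => 1
  | n + 1 => qPoch a q n * (1 - a * q ^ n)

/-- `₂Φ₁(0,0;q;q;q) = Σ_{n≥0} q^n/((q;q)_n)²`. -/
noncomputable def phi21zero (q : ℂ) : ℂ := ∑' n : ℕ, q ^ n / (qPoch q q n) ^ 2

/-- `₃Φ₂(0,0,q;b,c;q;q) = Σ_{n≥0} q^n/((b;q)_n (c;q)_n)`. -/
noncomputable def phi32zero (b c q : ℂ) : ℂ :=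
  ∑' n : ℕ, q ^ n / (qPoch b q n * qPoch c q n)

/-- Partitions with exactly `l` positive parts. -/
def PartL (l : ℕ) : Type :=
  {f : Fin l → ℕ // (∀ i j : Fin l, i ≤ j → f j ≤ f i) ∧ ∀ i, 0 < f i}

lemma qPoch_eq_prod (a q : ℂ) (n : ℕ) :
    qPoch a q n = ∏ j ∈ Finset.range n, (1 - a * q ^ j) := by
  induction n with
  | zero => simp [qPoch]
  | succ n ih => rw [qPoch, ih, Finset.prod_range_succ]

lemma qPoch_add (a q : ℂ) (m n : ℕ) :
    qPoch a q (m + n) = qPoch a q m * qPoch (a * q ^ m) q n := by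
  induction n with
  | zero => simp [qPoch]
  | succ n ih =>
      rw [← Nat.add_assoc, qPoch, ih, qPoch, pow_add]
      ring

lemma one_sub_sum_le_prod (s : Finset ℕ) (x : ℕ → ℝ) (h0 : ∀ j ∈ s, 0 ≤ x j)
    (h1 : ∀ j ∈ s, x j ≤ 1) : 1 - ∑ j ∈ s, x j ≤ ∏ j ∈ s, (1 - x j) := by
  induction s using Finset.cons_induction with
  | empty => simp
  | cons a s ha ih =>
      rw [Finset.prod_cons, Finset.sum_cons]
      have h0a : 0 ≤ x a := h0 a (Finset.mem_cons_self a s)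
      have h1a : x a ≤ 1 := h1 a (Finset.mem_cons_self a s)
      have ih' : 1 - ∑ j ∈ s, x j ≤ ∏ j ∈ s, (1 - x j) :=
        ih (fun j hj => h0 j (Finset.mem_cons_of_mem hj))
          (fun j hj => h1 j (Finset.mem_cons_of_mem hj))
      have hS : 0 ≤ ∑ j ∈ s, x j := Finset.sum_nonneg (fun j hj => h0 j (Finset.mem_cons_of_mem hj))
      nlinarith [mul_le_mul_of_nonneg_left ih' (by linarith : (0:ℝ) ≤ 1 - x a)]

lemma exists_lb {ρ : ℝ} (h0 : 0 ≤ ρ) (h1 : ρ < 1) :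
    ∃ C : ℝ, 0 < C ∧ ∀ s : Finset ℕ, (∀ j ∈ s, 1 ≤ j) → C ≤ ∏ j ∈ s, (1 - ρ ^ j) := by
  obtain ⟨N, hN⟩ : ∃ N : ℕ, ρ ^ N < (1 - ρ) / 2 :=
    exists_pow_lt_of_lt_one (by linarith) h1
  have hfacpos : ∀ j : ℕ, 1 ≤ j → 0 < 1 - ρ ^ j := by
    intro j hj
    have : ρ ^ j ≤ ρ ^ 1 := pow_le_pow_of_le_one h0 h1.le hj
    simp only [pow_one] at this
    linarith
  have htail : ∀ u : Finset ℕ, (∀ j ∈ u, N ≤ j) → ∑ j ∈ u, ρ ^ j ≤ 1 / 2 := by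
    intro u hu
    have hsub : u ⊆ Finset.Ico N (N + (u.sup id) + 1) := by
      intro j hj
      simp only [Finset.mem_Ico]
      exact ⟨hu j hj, by have := Finset.le_sup (f := id) hj; simp only [id] at this; omega⟩
    calc ∑ j ∈ u, ρ ^ j ≤ ∑ j ∈ Finset.Ico N (N + (u.sup id) + 1), ρ ^ j :=
          Finset.sum_le_sum_of_subset_of_nonneg hsub (fun j _ _ => pow_nonneg h0 j)
      _ = ∑ j ∈ Finset.range (N + (u.sup id) + 1 - N), ρ ^ (N + j) := by
          rw [Finset.sum_Ico_eq_sum_range]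
      _ = ρ ^ N * ∑ j ∈ Finset.range (N + (u.sup id) + 1 - N), ρ ^ j := by
          rw [Finset.mul_sum]; exact Finset.sum_congr rfl (fun j _ => by rw [pow_add])
      _ ≤ ρ ^ N * (1 - ρ)⁻¹ := by
          refine mul_le_mul_of_nonneg_left ?_ (pow_nonneg h0 N)
          calc ∑ j ∈ Finset.range _, ρ ^ j ≤ ∑' j : ℕ, ρ ^ j :=
                Summable.sum_le_tsum _ (fun j _ => pow_nonneg h0 j) (summable_geometric_of_lt_one h0 h1)
            _ = (1 - ρ)⁻¹ := tsum_geometric_of_lt_one h0 h1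
      _ ≤ 1 / 2 := by
          have h2 : (0:ℝ) < 1 - ρ := by linarith
          calc ρ ^ N * (1 - ρ)⁻¹ ≤ (1 - ρ) / 2 * (1 - ρ)⁻¹ :=
                mul_le_mul_of_nonneg_right hN.le (by positivity)
            _ = 1 / 2 := by field_simp
  refine ⟨(∏ j ∈ Finset.Ico 1 N, (1 - ρ ^ j)) * (1 / 2), ?_, ?_⟩
  · have : 0 < ∏ j ∈ Finset.Ico 1 N, (1 - ρ ^ j) :=
      Finset.prod_pos (fun j hj => hfacpos j (Finset.mem_Ico.mp hj).1)
    positivity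
  · intro s hs
    classical
    set s1 := s.filter (· < N) with hs1
    set s2 := s.filter (fun j => ¬ j < N) with hs2
    have hsplit : (∏ j ∈ s1, (1 - ρ ^ j)) * (∏ j ∈ s2, (1 - ρ ^ j)) = ∏ j ∈ s, (1 - ρ ^ j) :=
      Finset.prod_filter_mul_prod_filter_not s _ _
    have hsub1 : s1 ⊆ Finset.Ico 1 N := by
      intro j hj
      rw [hs1, Finset.mem_filter] at hj
      exact Finset.mem_Ico.mpr ⟨hs j hj.1, hj.2⟩
    have h1le : ∏ j ∈ Finset.Ico 1 N, (1 - ρ ^ j) ≤ ∏ j ∈ s1, (1 - ρ ^ j) := by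
      rw [← Finset.prod_sdiff hsub1]
      have hle1 : ∏ j ∈ Finset.Ico 1 N \ s1, (1 - ρ ^ j) ≤ 1 :=
        Finset.prod_le_one
          (fun j hj => (hfacpos j (Finset.mem_Ico.mp (Finset.mem_sdiff.mp hj).1).1).le)
          (fun j hj => by
            have := pow_nonneg h0 j; linarith)
      have hpos1 : 0 ≤ ∏ j ∈ s1, (1 - ρ ^ j) :=
        (Finset.prod_pos (fun j hj => hfacpos j (Finset.mem_Ico.mp (hsub1 hj)).1)).le
      nlinarith
    have h2le : (1:ℝ) / 2 ≤ ∏ j ∈ s2, (1 - ρ ^ j) := by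
      have := one_sub_sum_le_prod s2 (fun j => ρ ^ j)
        (fun j _ => pow_nonneg h0 j)
        (fun j hj => by
          have hj1 : 1 ≤ j := hs j (Finset.mem_filter.mp hj).1
          have h2 : ρ ^ j ≤ ρ ^ 1 := pow_le_pow_of_le_one h0 h1.le hj1
          have h3 : ρ ^ 1 = ρ := pow_one ρ
          linarith)
      have htl := htail s2 (fun j hj => by
        have := (Finset.mem_filter.mp hj).2; omega)
      linarith
    calc (∏ j ∈ Finset.Ico 1 N, (1 - ρ ^ j)) * (1 / 2)
        ≤ (∏ j ∈ s1, (1 - ρ ^ j)) * (∏ j ∈ s2, (1 - ρ ^ j)) := by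
          apply mul_le_mul h1le h2le (by norm_num)
          exact (Finset.prod_pos (fun j hj => hfacpos j (Finset.mem_Ico.mp (hsub1 hj)).1)).le
      _ = ∏ j ∈ s, (1 - ρ ^ j) := hsplit

lemma qPoch_norm_lb {ρ C : ℝ} (h0 : 0 ≤ ρ) (h1 : ρ < 1)
    (hC : ∀ s : Finset ℕ, (∀ j ∈ s, 1 ≤ j) → C ≤ ∏ j ∈ s, (1 - ρ ^ j))
    (a q : ℂ) (k n : ℕ) (hb : ∀ m : ℕ, ‖a‖ * ‖q‖ ^ m ≤ ρ ^ (k + 1 + m)) :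
    C ≤ ‖qPoch a q n‖ := by
  have key : ∀ j : ℕ, 1 - ρ ^ (k + 1 + j) ≤ ‖1 - a * q ^ j‖ := by
    intro j
    have h2 : ‖(1:ℂ)‖ - ‖a * q ^ j‖ ≤ ‖1 - a * q ^ j‖ := norm_sub_norm_le _ _
    rw [norm_one, norm_mul, norm_pow] at h2
    linarith [hb j]
  have hnn : ∀ j : ℕ, (0:ℝ) ≤ 1 - ρ ^ (k + 1 + j) := by
    intro j
    have : ρ ^ (k + 1 + j) ≤ ρ ^ 1 := pow_le_pow_of_le_one h0 h1.le (by omega)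
    have h3 : ρ ^ 1 = ρ := pow_one ρ
    linarith
  calc C ≤ ∏ j ∈ Finset.Ico (k + 1) (k + 1 + n), (1 - ρ ^ j) :=
        hC _ (fun j hj => by have := (Finset.mem_Ico.mp hj).1; omega)
    _ = ∏ j ∈ Finset.range n, (1 - ρ ^ (k + 1 + j)) := by
        rw [Finset.prod_Ico_eq_prod_range]; simp
    _ ≤ ∏ j ∈ Finset.range n, ‖1 - a * q ^ j‖ :=
        Finset.prod_le_prod (fun j _ => hnn j) (fun j _ => key j)
    _ = ‖qPoch a q n‖ := by rw [qPoch_eq_prod]; rw [← norm_prod]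

lemma pi_geom (l : ℕ) (r : Fin l → ℂ) (hr : ∀ i, ‖r i‖ < 1) :
    Summable (fun d : Fin l → ℕ => ∏ i, r i ^ d i) ∧
      ∑' d : Fin l → ℕ, ∏ i, r i ^ d i = ∏ i, (1 - r i)⁻¹ := by
  induction l with
  | zero =>
      constructor
      · exact Summable.of_finite
      · rw [tsum_fintype]
        simp
  | succ l ih =>
      obtain ⟨ihs, ihv⟩ := ih (fun i => r i.succ) (fun i => hr i.succ)
      set g : ℕ × (Fin l → ℕ) → ℂ :=
        fun x => r 0 ^ x.1 * ∏ i, (r i.succ) ^ (x.2 i) with hg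
      have hequiv : ∀ d : Fin (l+1) → ℕ,
          (∏ i, r i ^ d i) = g ((Fin.consEquiv (fun _ : Fin (l+1) => ℕ)).symm d) := by
        intro d
        rw [hg]
        simp only [Fin.prod_univ_succ]
        rfl
      have hgeo : Summable (fun n : ℕ => r 0 ^ n) := summable_geometric_of_norm_lt_one (hr 0)
      have hsg : Summable g := by
        apply Summable.of_norm
        have := Summable.mul_norm (R := ℂ) (f := fun n : ℕ => r 0 ^ n)
          (g := fun e : Fin l → ℕ => ∏ i, (r i.succ) ^ (e i)) hgeo.norm ihs.norm
        exact this
      have hsum : Summable (fun d : Fin (l+1) → ℕ => ∏ i, r i ^ d i) := by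
        rw [show (fun d : Fin (l+1) → ℕ => ∏ i, r i ^ d i) = g ∘ ((Fin.consEquiv (fun _ : Fin (l+1) => ℕ)).symm) from
          funext hequiv]
        exact hsg.comp_injective ((Fin.consEquiv (fun _ : Fin (l+1) => ℕ)).symm).injective
      refine ⟨hsum, ?_⟩
      have h1 : ∑' d : Fin (l+1) → ℕ, ∏ i, r i ^ d i = ∑' x, g x := by
        rw [show (fun d : Fin (l+1) → ℕ => ∏ i, r i ^ d i) = g ∘ ((Fin.consEquiv (fun _ : Fin (l+1) => ℕ)).symm) from
          funext hequiv]
        exact ((Fin.consEquiv (fun _ : Fin (l+1) => ℕ)).symm).tsum_eq g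
      rw [h1]
      have h2 : ∑' x, g x = (∑' n : ℕ, r 0 ^ n) * ∑' e : Fin l → ℕ, ∏ i, (r i.succ) ^ (e i) :=
        (tsum_mul_tsum_of_summable_norm hgeo.norm ihs.norm).symm
      rw [h2, tsum_geometric_of_norm_lt_one (hr 0), ihv, Fin.prod_univ_succ]

section PartStuff

variable {l : ℕ}

/-- tail sum from index `k`. -/
def Sfun (d : Fin l → ℕ) (k : ℕ) : ℕ := ∑ j : Fin l, if k ≤ (j : ℕ) then d j else 0

/-- weighted sum. -/
def Wfun (d : Fin l → ℕ) : ℕ := ∑ j : Fin l, ((j : ℕ) + 1) * d j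

lemma Sfun_eq_zero (d : Fin l → ℕ) (k : ℕ) (hk : l ≤ k) : Sfun d k = 0 := by
  unfold Sfun
  apply Finset.sum_eq_zero
  intro j _
  have := j.isLt
  rw [if_neg (by omega)]

lemma Sfun_succ (d : Fin l → ℕ) (k : ℕ) (hk : k < l) :
    Sfun d k = d ⟨k, hk⟩ + Sfun d (k + 1) := by
  unfold Sfun
  have h : ∀ j : Fin l, (if k ≤ (j : ℕ) then d j else 0) =
      (if j = (⟨k, hk⟩ : Fin l) then d j else 0) + (if k + 1 ≤ (j : ℕ) then d j else 0) := by
    intro j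
    rcases lt_trichotomy (j : ℕ) k with h | h | h
    · rw [if_neg (by omega), if_neg (by simp only [Fin.ext_iff]; omega), if_neg (by omega)]
    · rw [if_pos (by omega), if_pos (by simp only [Fin.ext_iff]; omega), if_neg (by omega)]
      omega
    · rw [if_pos (by omega), if_neg (by simp only [Fin.ext_iff]; omega), if_pos (by omega)]
      omega
  rw [Finset.sum_congr rfl (fun j _ => h j), Finset.sum_add_distrib]
  congr 1
  rw [Finset.sum_ite_eq' Finset.univ (⟨k, hk⟩ : Fin l) d]
  simp

lemma Sfun_antitone (d : Fin l → ℕ) {k k' : ℕ} (h : k ≤ k') : Sfun d k' ≤ Sfun d k := by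
  unfold Sfun
  apply Finset.sum_le_sum
  intro j _
  by_cases hj : k' ≤ (j : ℕ)
  · rw [if_pos hj, if_pos (by omega)]
  · rw [if_neg hj]
    exact Nat.zero_le _

lemma sum_one_add_Sfun (d : Fin l → ℕ) :
    (∑ i : Fin l, (1 + Sfun d (i : ℕ))) = l + Wfun d := by
  rw [Finset.sum_add_distrib]
  congr 1
  · simp
  · unfold Sfun Wfun
    rw [Finset.sum_comm]
    apply Finset.sum_congr rfl
    intro j _
    have h : ∀ i : Fin l, (if (i : ℕ) ≤ (j : ℕ) then d j else 0) =
        (if (i : ℕ) ∈ Finset.range ((j : ℕ) + 1) then d j else 0) := by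
      intro i; simp [Nat.lt_succ_iff]
    calc (∑ i : Fin l, if (i : ℕ) ≤ (j : ℕ) then d j else 0)
        = ∑ i ∈ Finset.range l, (if i ≤ (j : ℕ) then d j else 0) := by
          rw [← Fin.sum_univ_eq_sum_range]
      _ = ∑ i ∈ Finset.range l, (if i ∈ Finset.range ((j : ℕ) + 1) then d j else 0) := by
          apply Finset.sum_congr rfl; intro i _; simp [Nat.lt_succ_iff]
      _ = ∑ i ∈ Finset.range l ∩ Finset.range ((j : ℕ) + 1), d j := by
          rw [Finset.sum_ite_mem]
      _ = ((j : ℕ) + 1) * d j := by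
          have hsub : Finset.range ((j : ℕ) + 1) ⊆ Finset.range l :=
            Finset.range_subset_range.mpr (by have := j.isLt; omega)
          rw [Finset.inter_eq_right.mpr hsub, Finset.sum_const, Finset.card_range, smul_eq_mul]

/-- the map from difference vectors to partitions with exactly `l` parts. -/
def toPart (d : Fin l → ℕ) : PartL l :=
  ⟨fun i => 1 + Sfun d (i : ℕ),
    ⟨fun i j hij => by
        show 1 + Sfun d (j : ℕ) ≤ 1 + Sfun d (i : ℕ)
        have := Sfun_antitone d (show (i : ℕ) ≤ (j : ℕ) from hij)
        omega,
      fun i => by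
        show 0 < 1 + Sfun d (i : ℕ)
        omega⟩⟩

lemma toPart_apply (d : Fin l → ℕ) (i : Fin l) : (toPart d).1 i = 1 + Sfun d (i : ℕ) := rfl

lemma toPart_bijective : Function.Bijective (toPart (l := l)) := by
  constructor
  · intro d d' h
    have hS : ∀ k : ℕ, k < l → Sfun d k = Sfun d' k := by
      intro k hk
      have := congrFun (congrArg Subtype.val h) ⟨k, hk⟩
      simp only [toPart_apply] at this
      omega
    funext i
    have h1 : Sfun d (i : ℕ) = Sfun d' (i : ℕ) := hS _ i.isLt
    have h2 : Sfun d ((i : ℕ) + 1) = Sfun d' ((i : ℕ) + 1) := by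
      by_cases hk : (i : ℕ) + 1 < l
      · exact hS _ hk
      · rw [Sfun_eq_zero d _ (by omega), Sfun_eq_zero d' _ (by omega)]
    rw [Sfun_succ d _ i.isLt, Sfun_succ d' _ i.isLt] at h1
    have : (⟨(i : ℕ), i.isLt⟩ : Fin l) = i := Fin.eta i i.isLt
    rw [this] at h1
    omega
  · rintro ⟨f, hmono, hpos⟩
    set d : Fin l → ℕ := fun i =>
      f i - (if h : (i : ℕ) + 1 < l then f ⟨(i : ℕ) + 1, h⟩ else 1) with hd
    refine ⟨d, ?_⟩
    have key : ∀ n : ℕ, ∀ k : ℕ, ∀ hk : k < l, l - k ≤ n → 1 + Sfun d k = f ⟨k, hk⟩ := by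
      intro n
      induction n with
      | zero => intro k hk h; omega
      | succ n ih =>
          intro k hk h
          rw [Sfun_succ d k hk]
          by_cases hk1 : k + 1 < l
          · have hih := ih (k + 1) hk1 (by omega)
            have hdk : d ⟨k, hk⟩ = f ⟨k, hk⟩ - f ⟨k + 1, hk1⟩ := by
              rw [hd]; simp only; rw [dif_pos hk1]
            have hm : f ⟨k + 1, hk1⟩ ≤ f ⟨k, hk⟩ :=
              hmono ⟨k, hk⟩ ⟨k + 1, hk1⟩ (by simp [Fin.le_def])
            have hp := hpos ⟨k + 1, hk1⟩
            omega
          · have hz : Sfun d (k + 1) = 0 := Sfun_eq_zero d _ (by omega)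
            have hdk : d ⟨k, hk⟩ = f ⟨k, hk⟩ - 1 := by
              rw [hd]; simp only; rw [dif_neg hk1]
            have hp := hpos ⟨k, hk⟩
            omega
    apply Subtype.ext
    funext i
    rw [toPart_apply]
    have := key l (i : ℕ) i.isLt (by omega)
    rw [this, Fin.eta]

/-- difference vectors are equivalent to partitions with exactly `l` parts. -/
noncomputable def partEquiv (l : ℕ) : (Fin l → ℕ) ≃ PartL l :=
  Equiv.ofBijective toPart toPart_bijective

lemma partEquiv_apply (d : Fin l → ℕ) (i : Fin l) :
    ((partEquiv l) d).1 i = 1 + Sfun d (i : ℕ) := rfl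

lemma partEquiv_sum (d : Fin l → ℕ) :
    (∑ i, ((partEquiv l) d).1 i) = l + Wfun d := by
  rw [show (∑ i, ((partEquiv l) d).1 i) = ∑ i : Fin l, (1 + Sfun d (i : ℕ)) from rfl]
  exact sum_one_add_Sfun d

end PartStuff

section GeomEval

variable {l : ℕ}

lemma pow_Wfun (q : ℂ) (d : Fin l → ℕ) :
    q ^ Wfun d = ∏ j : Fin l, (q ^ ((j : ℕ) + 1)) ^ (d j) := by
  unfold Wfun
  rw [← Finset.prod_pow_eq_pow_sum]
  exact Finset.prod_congr rfl (fun j _ => pow_mul q _ _)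

lemma pow_Wfun_marked (q t : ℂ) (d : Fin l → ℕ) (k : ℕ) :
    q ^ Wfun d * t ^ Sfun d k =
      ∏ j : Fin l, ((if k ≤ (j : ℕ) then t * q ^ ((j : ℕ) + 1) else q ^ ((j : ℕ) + 1))) ^ (d j) := by
  have h1 : t ^ Sfun d k = ∏ j : Fin l, ((if k ≤ (j : ℕ) then t else 1)) ^ (d j) := by
    unfold Sfun
    rw [← Finset.prod_pow_eq_pow_sum]
    apply Finset.prod_congr rfl
    intro j _
    by_cases h : k ≤ (j : ℕ)
    · rw [if_pos h, if_pos h]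
    · rw [if_neg h, if_neg h, pow_zero, one_pow]
  rw [pow_Wfun q d, h1, ← Finset.prod_mul_distrib]
  apply Finset.prod_congr rfl
  intro j _
  rw [← mul_pow]
  congr 1
  by_cases h : k ≤ (j : ℕ)
  · rw [if_pos h, if_pos h]; ring
  · rw [if_neg h, if_neg h]; ring

lemma norm_pow_succ_lt_one {q : ℂ} (hq : ‖q‖ < 1) (j : ℕ) : ‖q ^ (j + 1)‖ < 1 := by
  rw [norm_pow]
  calc ‖q‖ ^ (j + 1) ≤ ‖q‖ ^ 1 := pow_le_pow_of_le_one (norm_nonneg q) hq.le (by omega)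
    _ < 1 := by simpa using hq

lemma prod_range_one_sub_q (q : ℂ) (k : ℕ) :
    ∏ j ∈ Finset.range k, (1 - q ^ (j + 1)) = qPoch q q k := by
  rw [qPoch_eq_prod]
  exact Finset.prod_congr rfl (fun j _ => by rw [pow_succ, mul_comm (q ^ j) q])

lemma tsum_qW {q : ℂ} (hq : ‖q‖ < 1) :
    Summable (fun d : Fin l → ℕ => q ^ Wfun d) ∧
      ∑' d : Fin l → ℕ, q ^ Wfun d = (qPoch q q l)⁻¹ := by
  have h := pi_geom l (fun j : Fin l => q ^ ((j : ℕ) + 1))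
    (fun j => norm_pow_succ_lt_one hq _)
  have he : (fun d : Fin l → ℕ => q ^ Wfun d) =
      fun d : Fin l → ℕ => ∏ j : Fin l, (q ^ ((j : ℕ) + 1)) ^ (d j) :=
    funext (fun d => pow_Wfun q d)
  constructor
  · rw [he]; exact h.1
  · rw [he, h.2]
    rw [Fin.prod_univ_eq_prod_range (fun j : ℕ => (1 - q ^ (j + 1))⁻¹) l,
      Finset.prod_inv_distrib, prod_range_one_sub_q]

lemma marked_prod (q t : ℂ) (k n : ℕ) :
    ∏ j ∈ Finset.range (k + n), (1 - (if k ≤ j then t * q ^ (j + 1) else q ^ (j + 1)))⁻¹ =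
      (qPoch q q k)⁻¹ * (qPoch (t * q ^ (k + 1)) q n)⁻¹ := by
  rw [Finset.prod_range_add]
  congr 1
  · have hcongr : ∀ j ∈ Finset.range k,
        (1 - (if k ≤ j then t * q ^ (j + 1) else q ^ (j + 1)))⁻¹ = (1 - q ^ (j + 1))⁻¹ :=
      fun j hj => by rw [if_neg (by simp at hj; omega)]
    rw [Finset.prod_congr rfl hcongr, Finset.prod_inv_distrib, prod_range_one_sub_q]
  · have hcongr : ∀ j ∈ Finset.range n,
        (1 - (if k ≤ k + j then t * q ^ (k + j + 1) else q ^ (k + j + 1)))⁻¹ =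
          (1 - (t * q ^ (k + 1)) * q ^ j)⁻¹ :=
      fun j _ => by
        rw [if_pos (by omega),
          show t * q ^ (k + j + 1) = t * q ^ (k + 1) * q ^ j from by
            rw [pow_add, pow_add, pow_add]; ring]
    rw [Finset.prod_congr rfl hcongr, Finset.prod_inv_distrib, ← qPoch_eq_prod]

lemma tsum_qW_marked {q : ℂ} (hq : ‖q‖ < 1) (t : ℂ) (ht : ∀ j : ℕ, ‖t * q ^ (j + 1)‖ < 1)
    (k : ℕ) (hk : k ≤ l) :
    Summable (fun d : Fin l → ℕ => q ^ Wfun d * t ^ Sfun d k) ∧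
      ∑' d : Fin l → ℕ, q ^ Wfun d * t ^ Sfun d k =
        (qPoch q q k)⁻¹ * (qPoch (t * q ^ (k + 1)) q (l - k))⁻¹ := by
  set rn : ℕ → ℂ := fun j => if k ≤ j then t * q ^ (j + 1) else q ^ (j + 1) with hrn
  have hrnorm : ∀ j : ℕ, ‖rn j‖ < 1 := by
    intro j
    by_cases h : k ≤ j
    · simp only [hrn, if_pos h]; exact ht _
    · simp only [hrn, if_neg h]; exact norm_pow_succ_lt_one hq _
  have h := pi_geom l (fun j : Fin l => rn (j : ℕ)) (fun j => hrnorm _)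
  have he : (fun d : Fin l → ℕ => q ^ Wfun d * t ^ Sfun d k) =
      fun d : Fin l → ℕ => ∏ j : Fin l, (rn (j : ℕ)) ^ (d j) := by
    funext d
    rw [pow_Wfun_marked q t d k]
  constructor
  · rw [he]; exact h.1
  · rw [he, h.2]
    rw [Fin.prod_univ_eq_prod_range (fun j : ℕ => (1 - rn j)⁻¹) l]
    conv_lhs => rw [show l = k + (l - k) from by omega]
    rw [marked_prod q t k (l - k)]

end GeomEval

section InnerEval

lemma tsum_qW_sumMarked {l : ℕ} {q : ℂ} (hq : ‖q‖ < 1) (t : ℂ)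
    (ht : ∀ j : ℕ, ‖t * q ^ (j + 1)‖ < 1) :
    Summable (fun d : Fin l → ℕ => q ^ Wfun d * ∑ i : Fin l, t ^ Sfun d (i : ℕ)) ∧
      ∑' d : Fin l → ℕ, (q ^ Wfun d * ∑ i : Fin l, t ^ Sfun d (i : ℕ)) =
        ∑ k ∈ Finset.range l,
          ((qPoch q q k)⁻¹ * (qPoch (t * q ^ (k + 1)) q (l - k))⁻¹) := by
  have he : (fun d : Fin l → ℕ => q ^ Wfun d * ∑ i : Fin l, t ^ Sfun d (i : ℕ)) =
      fun d : Fin l → ℕ => ∑ i : Fin l, (q ^ Wfun d * t ^ Sfun d (i : ℕ)) := by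
    funext d; rw [Finset.mul_sum]
  have hsummand : ∀ i : Fin l,
      Summable (fun d : Fin l → ℕ => q ^ Wfun d * t ^ Sfun d (i : ℕ)) :=
    fun i => (tsum_qW_marked hq t ht (i : ℕ) (i.isLt.le)).1
  constructor
  · rw [he]
    exact summable_sum (fun i _ => hsummand i)
  · rw [he, Summable.tsum_finsetSum (fun i _ => hsummand i)]
    rw [Fin.sum_univ_eq_sum_range
      (fun k => ∑' d : Fin l → ℕ, (q ^ Wfun d * t ^ Sfun d k)) l]
    apply Finset.sum_congr rfl
    intro k hk
    exact (tsum_qW_marked hq t ht k (by simp at hk; omega)).2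

lemma inner_eval (q T c : ℂ) (hq : ‖q‖ < 1)
    (ht : ∀ j : ℕ, ‖T ^ 2 * q ^ (j + 1)‖ < 1)
    (ht' : ∀ j : ℕ, ‖(T ^ 2)⁻¹ * q ^ (j + 1)‖ < 1) (l : ℕ) :
    ∑' p : PartL l, ∑' m : PartL l,
        q ^ ((∑ i, p.1 i) + (∑ i, m.1 i) - l) *
          ((∑ i, (T ^ (2 * p.1 i - 1) - (T⁻¹) ^ (2 * m.1 i - 1))) + c) =
      T * q ^ l * (qPoch q q l)⁻¹ *
          (∑ k ∈ Finset.range l,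
            ((qPoch q q k)⁻¹ * (qPoch (T ^ 2 * q ^ (k + 1)) q (l - k))⁻¹))
        - T⁻¹ * q ^ l * (qPoch q q l)⁻¹ *
          (∑ k ∈ Finset.range l,
            ((qPoch q q k)⁻¹ * (qPoch ((T ^ 2)⁻¹ * q ^ (k + 1)) q (l - k))⁻¹))
        + c * q ^ l * ((qPoch q q l)⁻¹) ^ 2 := by
  classical
  set t : ℂ := T ^ 2 with htdef
  set t' : ℂ := (T ^ 2)⁻¹ with ht'def
  set SR : ℂ := ∑ k ∈ Finset.range l,
    ((qPoch q q k)⁻¹ * (qPoch (t * q ^ (k + 1)) q (l - k))⁻¹) with hSR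
  set SR' : ℂ := ∑ k ∈ Finset.range l,
    ((qPoch q q k)⁻¹ * (qPoch (t' * q ^ (k + 1)) q (l - k))⁻¹) with hSR'
  set P : ℂ := (qPoch q q l)⁻¹ with hP
  have hform : ∀ d e : Fin l → ℕ,
      q ^ ((∑ i, ((partEquiv l) d).1 i) + (∑ i, ((partEquiv l) e).1 i) - l) *
        ((∑ i, (T ^ (2 * ((partEquiv l) d).1 i - 1) -
          (T⁻¹) ^ (2 * ((partEquiv l) e).1 i - 1))) + c) =
      (q ^ l * q ^ Wfun d * ((T * ∑ i : Fin l, t ^ Sfun d (i : ℕ)) + c)) * q ^ Wfun e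
        - (q ^ l * q ^ Wfun d * T⁻¹) * (q ^ Wfun e * ∑ i : Fin l, t' ^ Sfun e (i : ℕ)) := by
    intro d e
    have hexp : (∑ i, ((partEquiv l) d).1 i) + (∑ i, ((partEquiv l) e).1 i) - l =
        l + (Wfun d + Wfun e) := by
      rw [partEquiv_sum d, partEquiv_sum e]; omega
    have hTpow : ∀ i : Fin l, T ^ (2 * ((partEquiv l) d).1 i - 1) =
        T * t ^ Sfun d (i : ℕ) := by
      intro i
      rw [partEquiv_apply, show 2 * (1 + Sfun d (i : ℕ)) - 1 = 2 * Sfun d (i : ℕ) + 1 from by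
        omega, pow_succ, pow_mul, htdef]
      ring
    have hTpow' : ∀ i : Fin l, (T⁻¹) ^ (2 * ((partEquiv l) e).1 i - 1) =
        T⁻¹ * t' ^ Sfun e (i : ℕ) := by
      intro i
      rw [partEquiv_apply, show 2 * (1 + Sfun e (i : ℕ)) - 1 = 2 * Sfun e (i : ℕ) + 1 from by
        omega, pow_succ, pow_mul, ht'def, ← inv_pow]
      ring
    rw [hexp, pow_add, pow_add, Finset.sum_sub_distrib]
    rw [Finset.sum_congr rfl (fun i _ => hTpow i), Finset.sum_congr rfl (fun i _ => hTpow' i)]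
    rw [← Finset.mul_sum, ← Finset.mul_sum]
    ring
  have squW : Summable (fun d : Fin l → ℕ => q ^ Wfun d) := (tsum_qW (l := l) hq).1
  have sMark : Summable (fun d : Fin l → ℕ => q ^ Wfun d * ∑ i : Fin l, t ^ Sfun d (i : ℕ)) :=
    (tsum_qW_sumMarked hq t ht).1
  have sMark' : Summable (fun d : Fin l → ℕ => q ^ Wfun d * ∑ i : Fin l, t' ^ Sfun d (i : ℕ)) :=
    (tsum_qW_sumMarked hq t' ht').1
  calc ∑' p : PartL l, ∑' m : PartL l,
        q ^ ((∑ i, p.1 i) + (∑ i, m.1 i) - l) *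
          ((∑ i, (T ^ (2 * p.1 i - 1) - (T⁻¹) ^ (2 * m.1 i - 1))) + c)
      = ∑' d : Fin l → ℕ, ∑' m : PartL l,
          q ^ ((∑ i, ((partEquiv l) d).1 i) + (∑ i, m.1 i) - l) *
            ((∑ i, (T ^ (2 * ((partEquiv l) d).1 i - 1) - (T⁻¹) ^ (2 * m.1 i - 1))) + c) :=
        (Equiv.tsum_eq (partEquiv l) _).symm
    _ = ∑' d : Fin l → ℕ, ∑' e : Fin l → ℕ,
          q ^ ((∑ i, ((partEquiv l) d).1 i) + (∑ i, ((partEquiv l) e).1 i) - l) *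
            ((∑ i, (T ^ (2 * ((partEquiv l) d).1 i - 1) -
              (T⁻¹) ^ (2 * ((partEquiv l) e).1 i - 1))) + c) :=
        tsum_congr (fun d => (Equiv.tsum_eq (partEquiv l) _).symm)
    _ = ∑' d : Fin l → ℕ,
          ((q ^ l * q ^ Wfun d * ((T * ∑ i : Fin l, t ^ Sfun d (i : ℕ)) + c)) * P
            - (q ^ l * q ^ Wfun d * T⁻¹) * SR') := by
        apply tsum_congr
        intro d
        rw [tsum_congr (fun e => hform d e)]
        rw [Summable.tsum_sub (squW.mul_left _) (sMark'.mul_left _)]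
        rw [tsum_mul_left, tsum_mul_left, (tsum_qW hq).2, (tsum_qW_sumMarked hq t' ht').2]
    _ = ∑' d : Fin l → ℕ,
          ((T * q ^ l * P) * (q ^ Wfun d * ∑ i : Fin l, t ^ Sfun d (i : ℕ))
            + (c * q ^ l * P - T⁻¹ * q ^ l * SR') * q ^ Wfun d) := by
        apply tsum_congr
        intro d
        ring
    _ = (T * q ^ l * P) * (∑' d : Fin l → ℕ, (q ^ Wfun d * ∑ i : Fin l, t ^ Sfun d (i : ℕ)))
          + (c * q ^ l * P - T⁻¹ * q ^ l * SR') * (∑' d : Fin l → ℕ, q ^ Wfun d) := by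
        rw [Summable.tsum_add (sMark.mul_left _) (squW.mul_left _), tsum_mul_left, tsum_mul_left]
    _ = T * q ^ l * P * SR - T⁻¹ * q ^ l * P * SR' + c * q ^ l * P ^ 2 := by
        rw [(tsum_qW_sumMarked hq t ht).2, (tsum_qW hq).2, ← hSR, ← hP]
        ring

end InnerEval

section Reindex

lemma inv_norm_le {C : ℝ} (hC0 : 0 < C) (x : ℂ) (hx : C ≤ ‖x‖) : ‖x⁻¹‖ ≤ C⁻¹ := by
  rw [norm_inv]
  exact inv_anti₀ hC0 hx

lemma phi32_tail (q b c1 : ℂ) (hq : ‖q‖ < 1) {C : ℝ} (hC0 : 0 < C)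
    (hb : ∀ n, C ≤ ‖qPoch b q n‖) (hc : ∀ n, C ≤ ‖qPoch c1 q n‖) :
    Summable (fun n : ℕ => q ^ n / (qPoch b q n * qPoch c1 q n)) ∧
      ∑' m : ℕ, q ^ (m + 1) * (qPoch b q (m + 1))⁻¹ * (qPoch c1 q (m + 1))⁻¹ =
        phi32zero b c1 q - 1 := by
  have hsum : Summable (fun n : ℕ => q ^ n / (qPoch b q n * qPoch c1 q n)) := by
    apply Summable.of_norm_bounded (g := fun n : ℕ => C⁻¹ * C⁻¹ * ‖q‖ ^ n)
    · exact (summable_geometric_of_lt_one (norm_nonneg q) hq).mul_left _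
    · intro n
      calc ‖q ^ n / (qPoch b q n * qPoch c1 q n)‖
          = ‖q‖ ^ n * (‖(qPoch b q n)⁻¹‖ * ‖(qPoch c1 q n)⁻¹‖) := by
            rw [div_eq_mul_inv, mul_inv, norm_mul, norm_mul, norm_pow]
        _ ≤ ‖q‖ ^ n * (C⁻¹ * C⁻¹) := by
            have h1 := inv_norm_le hC0 _ (hb n)
            have h2 := inv_norm_le hC0 _ (hc n)
            gcongr
        _ = C⁻¹ * C⁻¹ * ‖q‖ ^ n := by ring
  refine ⟨hsum, ?_⟩
  have h0 : q ^ 0 / (qPoch b q 0 * qPoch c1 q 0) = 1 := by simp [qPoch]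
  have := Summable.tsum_eq_zero_add hsum
  rw [h0] at this
  have htail : ∑' m : ℕ, q ^ (m + 1) / (qPoch b q (m + 1) * qPoch c1 q (m + 1)) =
      ∑' m : ℕ, q ^ (m + 1) * (qPoch b q (m + 1))⁻¹ * (qPoch c1 q (m + 1))⁻¹ :=
    tsum_congr (fun m => by rw [div_eq_mul_inv, mul_inv]; ring)
  rw [htail] at this
  rw [phi32zero, this]
  ring

lemma summable_AA (q u : ℂ) (hq : ‖q‖ < 1) {C : ℝ} (hC0 : 0 < C)
    (hb0 : ∀ n, C ≤ ‖qPoch q q n‖)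
    (hbu : ∀ k n : ℕ, C ≤ ‖qPoch (u * q ^ (k + 1)) q n‖) :
    Summable (fun l : ℕ => q ^ l * (qPoch q q l)⁻¹ *
      ∑ k ∈ Finset.range l, ((qPoch q q k)⁻¹ * (qPoch (u * q ^ (k + 1)) q (l - k))⁻¹)) := by
  apply Summable.of_norm_bounded
    (g := fun l : ℕ => C⁻¹ * C⁻¹ * C⁻¹ * ((l : ℝ) * ‖q‖ ^ l))
  · apply Summable.mul_left
    have h := summable_pow_mul_geometric_of_norm_lt_one (R := ℝ) 1 (r := ‖q‖) (by simpa using hq)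
    exact h.congr (fun n => by simp)
  · intro l
    have hsumb : ‖∑ k ∈ Finset.range l,
        ((qPoch q q k)⁻¹ * (qPoch (u * q ^ (k + 1)) q (l - k))⁻¹)‖ ≤ (l : ℝ) * (C⁻¹ * C⁻¹) := by
      calc ‖∑ k ∈ Finset.range l, ((qPoch q q k)⁻¹ * (qPoch (u * q ^ (k + 1)) q (l - k))⁻¹)‖
          ≤ ∑ k ∈ Finset.range l, ‖(qPoch q q k)⁻¹ * (qPoch (u * q ^ (k + 1)) q (l - k))⁻¹‖ :=
            norm_sum_le _ _
        _ ≤ ∑ _k ∈ Finset.range l, (C⁻¹ * C⁻¹) := by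
            apply Finset.sum_le_sum
            intro k _
            rw [norm_mul]
            have h1 := inv_norm_le hC0 _ (hb0 k)
            have h2 := inv_norm_le hC0 _ (hbu k (l - k))
            exact mul_le_mul h1 h2 (norm_nonneg _) (by positivity)
        _ = (l : ℝ) * (C⁻¹ * C⁻¹) := by
            rw [Finset.sum_const, Finset.card_range, nsmul_eq_mul]
    calc ‖q ^ l * (qPoch q q l)⁻¹ *
          ∑ k ∈ Finset.range l, ((qPoch q q k)⁻¹ * (qPoch (u * q ^ (k + 1)) q (l - k))⁻¹)‖
        = ‖q‖ ^ l * ‖(qPoch q q l)⁻¹‖ *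
          ‖∑ k ∈ Finset.range l, ((qPoch q q k)⁻¹ * (qPoch (u * q ^ (k + 1)) q (l - k))⁻¹)‖ := by
          rw [norm_mul, norm_mul, norm_pow]
      _ ≤ ‖q‖ ^ l * C⁻¹ * ((l : ℝ) * (C⁻¹ * C⁻¹)) := by
          have h1 := inv_norm_le hC0 _ (hb0 l)
          gcongr
      _ = C⁻¹ * C⁻¹ * C⁻¹ * ((l : ℝ) * ‖q‖ ^ l) := by ring

lemma reindex (q u : ℂ) (hq : ‖q‖ < 1) {C : ℝ} (hC0 : 0 < C)
    (hb0 : ∀ n, C ≤ ‖qPoch q q n‖)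
    (hbq : ∀ k n : ℕ, C ≤ ‖qPoch (q ^ (k + 1)) q n‖)
    (hbu : ∀ k n : ℕ, C ≤ ‖qPoch (u * q ^ (k + 1)) q n‖) :
    ∑' l : ℕ, (q ^ l * (qPoch q q l)⁻¹ *
        ∑ k ∈ Finset.range l, ((qPoch q q k)⁻¹ * (qPoch (u * q ^ (k + 1)) q (l - k))⁻¹)) =
      ∑' k : ℕ, q ^ k / (qPoch q q k) ^ 2 *
        (phi32zero (u * q ^ (k + 1)) (q ^ (k + 1)) q - 1) := by
  classical
  set f : ℕ × ℕ → ℂ := fun x => if x.2 < x.1 then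
    q ^ x.1 * (qPoch q q x.1)⁻¹ *
      ((qPoch q q x.2)⁻¹ * (qPoch (u * q ^ (x.2 + 1)) q (x.1 - x.2))⁻¹) else 0 with hf
  set ι : ℕ × ℕ → ℕ × ℕ := fun y => (y.1 + y.2 + 1, y.1) with hι
  have hinj : Function.Injective ι := by
    rintro ⟨a, b⟩ ⟨a', b'⟩ h
    simp only [hι, Prod.mk.injEq] at h
    obtain ⟨h1, h2⟩ := h
    simp only [Prod.mk.injEq]
    omega
  have hsupp : Function.support f ⊆ Set.range ι := by
    rintro ⟨l, i⟩ hx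
    simp only [Function.mem_support, hf] at hx
    by_cases h : i < l
    · refine ⟨(i, l - i - 1), ?_⟩
      simp [hι, Prod.ext_iff]
      omega
    · simp [h] at hx
  have hcomp : ∀ y : ℕ × ℕ, f (ι y) =
      (q ^ y.1 * ((qPoch q q y.1)⁻¹) ^ 2) *
        (q ^ (y.2 + 1) * (qPoch (u * q ^ (y.1 + 1)) q (y.2 + 1))⁻¹ *
          (qPoch (q ^ (y.1 + 1)) q (y.2 + 1))⁻¹) := by
    rintro ⟨k, m⟩
    simp only [hf, hι]
    rw [if_pos (by omega : (k, m).1 < k + m + 1)]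

    have h1 : k + m + 1 - k = m + 1 := by omega
    have h2 : qPoch q q (k + m + 1) = qPoch q q k * qPoch (q ^ (k + 1)) q (m + 1) := by
      have h3 := qPoch_add q q k (m + 1)
      rw [show k + (m + 1) = k + m + 1 from by omega] at h3
      rw [h3]
      congr 2
      rw [pow_succ]
      ring
    rw [h1, h2, mul_inv]
    rw [show k + m + 1 = k + (m + 1) from by omega, pow_add]
    ring
  have hgeo : Summable (fun k : ℕ => ‖q‖ ^ k) :=
    summable_geometric_of_lt_one (norm_nonneg q) hq
  have hgeo' : Summable (fun m : ℕ => ‖q‖ ^ (m + 1)) := by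
    apply (hgeo.mul_left ‖q‖).congr
    intro m
    rw [pow_succ]
    ring
  have hσ : Summable (fun y : ℕ × ℕ => f (ι y)) := by
    apply Summable.of_norm_bounded
      (g := fun y : ℕ × ℕ => C⁻¹ * C⁻¹ * C⁻¹ * C⁻¹ * (‖q‖ ^ y.1 * ‖q‖ ^ (y.2 + 1)))
    · exact (Summable.mul_of_nonneg hgeo hgeo'
        (fun k => by positivity) (fun m => by positivity)).mul_left _
    · rintro ⟨k, m⟩
      rw [hcomp (k, m)]
      simp only
      calc ‖(q ^ k * ((qPoch q q k)⁻¹) ^ 2) *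
            (q ^ (m + 1) * (qPoch (u * q ^ (k + 1)) q (m + 1))⁻¹ *
              (qPoch (q ^ (k + 1)) q (m + 1))⁻¹)‖
          = ‖q‖ ^ k * ‖(qPoch q q k)⁻¹‖ ^ 2 *
            (‖q‖ ^ (m + 1) * ‖(qPoch (u * q ^ (k + 1)) q (m + 1))⁻¹‖ *
              ‖(qPoch (q ^ (k + 1)) q (m + 1))⁻¹‖) := by
            simp [norm_mul, norm_pow]
        _ ≤ ‖q‖ ^ k * (C⁻¹) ^ 2 * (‖q‖ ^ (m + 1) * C⁻¹ * C⁻¹) := by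
            have h1 := inv_norm_le hC0 _ (hb0 k)
            have h2 := inv_norm_le hC0 _ (hbu (k + 1 - 1) (m + 1))
            have h2' := inv_norm_le hC0 _ (hbu k (m + 1))
            have h3 := inv_norm_le hC0 _ (hbq k (m + 1))
            gcongr
        _ = C⁻¹ * C⁻¹ * C⁻¹ * C⁻¹ * (‖q‖ ^ k * ‖q‖ ^ (m + 1)) := by ring
  have hfsum : Summable f := (hinj.summable_iff
    (fun x hx => by
      by_contra hne
      exact hx (hsupp (Function.mem_support.mpr hne)))).1 hσ
  calc ∑' l : ℕ, (q ^ l * (qPoch q q l)⁻¹ *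
        ∑ k ∈ Finset.range l, ((qPoch q q k)⁻¹ * (qPoch (u * q ^ (k + 1)) q (l - k))⁻¹))
      = ∑' l : ℕ, ∑' i : ℕ, f (l, i) := by
        apply tsum_congr
        intro l
        rw [tsum_eq_sum (s := Finset.range l)
          (fun i hi => by
            simp only [hf]
            rw [if_neg (fun h => hi (Finset.mem_range.mpr h))]), Finset.mul_sum]
        apply Finset.sum_congr rfl
        intro k hk
        simp only [hf]
        rw [if_pos (Finset.mem_range.mp hk)]
    _ = ∑' x : ℕ × ℕ, f x := (Summable.tsum_prod' hfsum (fun l =>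
        summable_of_ne_finset_zero (s := Finset.range l)
          (fun i hi => by
            simp only [hf]
            rw [if_neg (fun h => hi (Finset.mem_range.mpr h))]))).symm
    _ = ∑' y : ℕ × ℕ, f (ι y) := (hinj.tsum_eq hsupp).symm
    _ = ∑' k : ℕ, ∑' m : ℕ, f (ι (k, m)) := Summable.tsum_prod' hσ (fun k => hσ.prod_factor k)
    _ = ∑' k : ℕ, q ^ k / (qPoch q q k) ^ 2 *
        (phi32zero (u * q ^ (k + 1)) (q ^ (k + 1)) q - 1) := by
        apply tsum_congr
        intro k
        have htail := (phi32_tail q (u * q ^ (k + 1)) (q ^ (k + 1)) hq hC0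
          (fun n => hbu k n) (fun n => hbq k n)).2
        calc ∑' m : ℕ, f (ι (k, m))
            = ∑' m : ℕ, (q ^ k * ((qPoch q q k)⁻¹) ^ 2) *
              (q ^ (m + 1) * (qPoch (u * q ^ (k + 1)) q (m + 1))⁻¹ *
                (qPoch (q ^ (k + 1)) q (m + 1))⁻¹) := tsum_congr (fun m => hcomp (k, m))
          _ = (q ^ k * ((qPoch q q k)⁻¹) ^ 2) *
              ∑' m : ℕ, (q ^ (m + 1) * (qPoch (u * q ^ (k + 1)) q (m + 1))⁻¹ *
                (qPoch (q ^ (k + 1)) q (m + 1))⁻¹) := tsum_mul_left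
          _ = q ^ k / (qPoch q q k) ^ 2 *
              (phi32zero (u * q ^ (k + 1)) (q ^ (k + 1)) q - 1) := by
              rw [htail, div_eq_mul_inv, inv_pow]

end Reindex

/-- The Bloch-Okounkov 1-point `a_∞`-function of level `-1`, charge `0`.
Here `t = T²`, so `t^{λ_i-1/2} = T^{2λ_i-1}`, `t^{-μ_i+1/2} = (T⁻¹)^{2μ_i-1}`,
and `1/(t^{-1/2}-t^{1/2}) = 1/(T⁻¹-T)`.  The basis vector of the charge-zero
Fock space indexed by a pair of partitions `(λ,μ)` of equal length `l` is an
eigenvector of `q^{L₀}A(t)` with eigenvalue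
`q^{|λ|+|μ|-l}(Σ_i (t^{λ_i-1/2}-t^{-μ_i+1/2}) + 1/(t^{-1/2}-t^{1/2}))`, and the
trace sums these eigenvalues.  In the one-based sums over `i ≥ 1` on the
right-hand side we write `i = a + 1`. -/
theorem stmt17 (q T : ℂ) (hq : ‖q‖ < 1) (hT : ‖T‖ < 1) (hT0 : T ≠ 0)
    (hqT : ‖q‖ < ‖T‖ ^ 2) :
    ∑' l : ℕ, ∑' p : PartL l, ∑' m : PartL l,
        q ^ ((∑ i, p.1 i) + (∑ i, m.1 i) - l) *
          ((∑ i, (T ^ (2 * p.1 i - 1) - (T⁻¹) ^ (2 * m.1 i - 1))) +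
            1 / (T⁻¹ - T)) =
      phi21zero q / (T⁻¹ - T) +
        T * ∑' a : ℕ, q ^ a / (qPoch q q a) ^ 2 *
            (phi32zero (T ^ 2 * q ^ (a + 1)) (q ^ (a + 1)) q - 1) -
        T⁻¹ * ∑' a : ℕ, q ^ a / (qPoch q q a) ^ 2 *
            (phi32zero ((T ^ 2)⁻¹ * q ^ (a + 1)) (q ^ (a + 1)) q - 1) := by
  classical
  have hTn : (0:ℝ) < ‖T‖ := norm_pos_iff.mpr hT0
  set ρ : ℝ := max ‖q‖ (‖q‖ / ‖T‖ ^ 2) with hρ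
  have hρ0 : 0 ≤ ρ := le_trans (norm_nonneg q) (le_max_left _ _)
  have hρ1 : ρ < 1 := by
    apply max_lt hq
    rw [div_lt_one (by positivity)]
    exact hqT
  have hqρ : ‖q‖ ≤ ρ := le_max_left _ _
  have hq2ρ : ‖q‖ / ‖T‖ ^ 2 ≤ ρ := le_max_right _ _
  obtain ⟨C, hC0, hCb⟩ := exists_lb hρ0 hρ1
  have hA : ∀ k n : ℕ, C ≤ ‖qPoch (q ^ (k + 1)) q n‖ := by
    intro k n
    apply qPoch_norm_lb hρ0 hρ1 hCb _ _ k n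
    intro m
    rw [norm_pow, ← pow_add]
    exact pow_le_pow_left₀ (norm_nonneg q) hqρ _
  have hb0 : ∀ n : ℕ, C ≤ ‖qPoch q q n‖ := by
    intro n
    have := hA 0 n
    simpa using this
  have hBb : ∀ k m : ℕ, ‖T ^ 2 * q ^ (k + 1)‖ * ‖q‖ ^ m ≤ ρ ^ (k + 1 + m) := by
    intro k m
    rw [norm_mul, norm_pow, norm_pow]
    have h1 : ‖T‖ ^ 2 ≤ 1 := by nlinarith [norm_nonneg T]
    have h3 : ‖q‖ ^ (k + 1 + m) ≤ ρ ^ (k + 1 + m) := pow_le_pow_left₀ (norm_nonneg q) hqρ _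
    have h2 : ‖q‖ ^ (k + 1) * ‖q‖ ^ m = ‖q‖ ^ (k + 1 + m) := by rw [← pow_add]
    nlinarith [pow_nonneg (norm_nonneg q) (k + 1), pow_nonneg (norm_nonneg q) m,
      pow_nonneg (norm_nonneg q) (k + 1 + m), pow_nonneg (norm_nonneg T) 2]
  have hB : ∀ k n : ℕ, C ≤ ‖qPoch (T ^ 2 * q ^ (k + 1)) q n‖ :=
    fun k n => qPoch_norm_lb hρ0 hρ1 hCb _ _ k n (hBb k)
  have hB'b : ∀ k m : ℕ, ‖(T ^ 2)⁻¹ * q ^ (k + 1)‖ * ‖q‖ ^ m ≤ ρ ^ (k + 1 + m) := by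
    intro k m
    rw [norm_mul, norm_inv, norm_pow, norm_pow]
    have h2 : (‖T‖ ^ 2)⁻¹ * ‖q‖ ^ (k + 1) * ‖q‖ ^ m = ‖q‖ ^ (k + m) * (‖q‖ / ‖T‖ ^ 2) := by
      rw [div_eq_mul_inv, pow_succ, pow_add]
      ring
    have h3 : ‖q‖ ^ (k + m) * (‖q‖ / ‖T‖ ^ 2) ≤ ρ ^ (k + m) * ρ :=
      mul_le_mul (pow_le_pow_left₀ (norm_nonneg q) hqρ _) hq2ρ (by positivity) (by positivity)
    calc (‖T‖ ^ 2)⁻¹ * ‖q‖ ^ (k + 1) * ‖q‖ ^ m = ‖q‖ ^ (k + m) * (‖q‖ / ‖T‖ ^ 2) := h2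
      _ ≤ ρ ^ (k + m) * ρ := h3
      _ = ρ ^ (k + 1 + m) := by
          rw [← pow_succ]
          congr 1
          omega
  have hB' : ∀ k n : ℕ, C ≤ ‖qPoch ((T ^ 2)⁻¹ * q ^ (k + 1)) q n‖ :=
    fun k n => qPoch_norm_lb hρ0 hρ1 hCb _ _ k n (hB'b k)
  have ht : ∀ j : ℕ, ‖T ^ 2 * q ^ (j + 1)‖ < 1 := by
    intro j
    have h := hBb j 0
    simp only [pow_zero, mul_one, Nat.add_zero] at h
    calc ‖T ^ 2 * q ^ (j + 1)‖ ≤ ρ ^ (j + 1) := h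
      _ ≤ ρ ^ 1 := pow_le_pow_of_le_one hρ0 hρ1.le (by omega)
      _ < 1 := by simpa using hρ1
  have ht' : ∀ j : ℕ, ‖(T ^ 2)⁻¹ * q ^ (j + 1)‖ < 1 := by
    intro j
    have h := hB'b j 0
    simp only [pow_zero, mul_one, Nat.add_zero] at h
    calc ‖(T ^ 2)⁻¹ * q ^ (j + 1)‖ ≤ ρ ^ (j + 1) := h
      _ ≤ ρ ^ 1 := pow_le_pow_of_le_one hρ0 hρ1.le (by omega)
      _ < 1 := by simpa using hρ1
  -- abbreviations
  set c : ℂ := 1 / (T⁻¹ - T) with hc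
  set AAf : ℕ → ℂ := fun l => q ^ l * (qPoch q q l)⁻¹ *
    ∑ k ∈ Finset.range l, ((qPoch q q k)⁻¹ * (qPoch (T ^ 2 * q ^ (k + 1)) q (l - k))⁻¹)
    with hAAf
  set BBf : ℕ → ℂ := fun l => q ^ l * (qPoch q q l)⁻¹ *
    ∑ k ∈ Finset.range l, ((qPoch q q k)⁻¹ * (qPoch ((T ^ 2)⁻¹ * q ^ (k + 1)) q (l - k))⁻¹)
    with hBBf
  set CCf : ℕ → ℂ := fun l => q ^ l * ((qPoch q q l)⁻¹) ^ 2 with hCCf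
  have sAA : Summable AAf := summable_AA q (T ^ 2) hq hC0 hb0 hB
  have sBB : Summable BBf := summable_AA q ((T ^ 2)⁻¹) hq hC0 hb0 hB'
  have sCC : Summable CCf := by
    apply Summable.of_norm_bounded (g := fun l : ℕ => C⁻¹ * C⁻¹ * ‖q‖ ^ l)
    · exact (summable_geometric_of_lt_one (norm_nonneg q) hq).mul_left _
    · intro l
      calc ‖CCf l‖ = ‖q‖ ^ l * ‖(qPoch q q l)⁻¹‖ ^ 2 := by
            rw [hCCf]
            simp [norm_mul, norm_pow]
      _ ≤ ‖q‖ ^ l * (C⁻¹) ^ 2 := by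
            have h1 := inv_norm_le hC0 _ (hb0 l)
            gcongr
      _ = C⁻¹ * C⁻¹ * ‖q‖ ^ l := by ring
  calc ∑' l : ℕ, ∑' p : PartL l, ∑' m : PartL l,
        q ^ ((∑ i, p.1 i) + (∑ i, m.1 i) - l) *
          ((∑ i, (T ^ (2 * p.1 i - 1) - (T⁻¹) ^ (2 * m.1 i - 1))) + c)
      = ∑' l : ℕ, (T * AAf l - T⁻¹ * BBf l + c * CCf l) := by
        apply tsum_congr
        intro l
        rw [inner_eval q T c hq ht ht' l, hAAf, hBBf, hCCf]
        ring
    _ = (T * ∑' l, AAf l) - (T⁻¹ * ∑' l, BBf l) + c * ∑' l, CCf l := by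
        rw [Summable.tsum_add ((sAA.mul_left T).sub (sBB.mul_left T⁻¹)) (sCC.mul_left c),
          Summable.tsum_sub (sAA.mul_left T) (sBB.mul_left T⁻¹), tsum_mul_left, tsum_mul_left,
          tsum_mul_left]
    _ = phi21zero q / (T⁻¹ - T) +
        T * ∑' a : ℕ, q ^ a / (qPoch q q a) ^ 2 *
            (phi32zero (T ^ 2 * q ^ (a + 1)) (q ^ (a + 1)) q - 1) -
        T⁻¹ * ∑' a : ℕ, q ^ a / (qPoch q q a) ^ 2 *
            (phi32zero ((T ^ 2)⁻¹ * q ^ (a + 1)) (q ^ (a + 1)) q - 1) := by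
        rw [hAAf, hBBf, hCCf]
        rw [reindex q (T ^ 2) hq hC0 hb0 hA hB, reindex q ((T ^ 2)⁻¹) hq hC0 hb0 hA hB']
        have hphi : ∑' l : ℕ, q ^ l * ((qPoch q q l)⁻¹) ^ 2 = phi21zero q := by
          rw [phi21zero]
          apply tsum_congr
          intro l
          rw [div_eq_mul_inv, inv_pow]
        rw [hphi, hc]
        ring
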